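/- Let X and Y be disjoint nonempty subsets of a finite set [n], with |X| = r and |Y| = s. Let 𝒳 = {{x} : x ∈ X} and 𝒴 = {X ∪ {y} : y ∈ Y}, viewed in the Boolean lattice of subsets of [n] ordered by inclusion. Then 𝒳 ≤ 𝒴, for each x ∈ X and y ∈ Y the set {x, y} lies in the convex hull [𝒳, 𝒴] and the only interval [S, T] with S ∈ 𝒳, T ∈ 𝒴 containing {x, y} is [{x}, X ∪ {y}], and consequently every family of intervals [S, T] with S ∈ 𝒳, T ∈ 𝒴 whose union contains [𝒳, 𝒴] has at least r·s members. -/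
import Mathlib


/-- **Frankl's example.** Let `X, Y` be disjoint nonempty subsets of `[n]` with
`|X| = r`, `|Y| = s`, and set `𝒳 = {{x} : x ∈ X}`, `𝒴 = {X ∪ {y} : y ∈ Y}` in the
Boolean lattice of subsets of `[n]`. Then `𝒳 ≤ 𝒴`; for each `x ∈ X`, `y ∈ Y` the
set `{x, y}` lies in the convex hull `[𝒳, 𝒴]` and the only interval `[S, T]` with
`S ∈ 𝒳`, `T ∈ 𝒴` containing it is `[{x}, X ∪ {y}]`; consequently every family of
intervals with endpoints in `𝒳 × 𝒴` covering `[𝒳, 𝒴]` has at least `r⬝s` members. -/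
theorem stmt11 (n r s : ℕ) (X Y : Finset (Fin n))
    (hdisj : Disjoint X Y) (hX : X.Nonempty) (hY : Y.Nonempty)
    (hXr : X.card = r) (hYs : Y.card = s)
    (𝒳 𝒴 : Finset (Finset (Fin n)))
    (h𝒳 : 𝒳 = X.image fun x => ({x} : Finset (Fin n)))
    (h𝒴 : 𝒴 = Y.image fun y => insert y X) :
    ((∀ S ∈ 𝒳, ∃ T ∈ 𝒴, S ⊆ T) ∧ (∀ T ∈ 𝒴, ∃ S ∈ 𝒳, S ⊆ T)) ∧
    (∀ x ∈ X, ∀ y ∈ Y,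
      (∃ S ∈ 𝒳, ∃ T ∈ 𝒴, S ⊆ ({x, y} : Finset (Fin n)) ∧ ({x, y} : Finset (Fin n)) ⊆ T) ∧
      (∀ S ∈ 𝒳, ∀ T ∈ 𝒴, S ⊆ ({x, y} : Finset (Fin n)) → ({x, y} : Finset (Fin n)) ⊆ T →
        S = {x} ∧ T = insert y X)) ∧
    (∀ F : Finset (Finset (Fin n) × Finset (Fin n)),
      (∀ p ∈ F, p.1 ∈ 𝒳 ∧ p.2 ∈ 𝒴) →
      ({Z : Finset (Fin n) | ∃ S ∈ 𝒳, ∃ T ∈ 𝒴, S ⊆ Z ∧ Z ⊆ T} ⊆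
        ⋃ p ∈ F, Set.Icc p.1 p.2) →
      r * s ≤ F.card) := by
  subst h𝒳 h𝒴 hXr hYs
  have hXY : ∀ a, a ∈ X → a ∉ Y := fun a ha => Finset.disjoint_left.mp hdisj ha
  have huniq : ∀ x ∈ X, ∀ y ∈ Y,
      ∀ S ∈ X.image (fun x => ({x} : Finset (Fin n))),
      ∀ T ∈ Y.image (fun y => insert y X),
      S ⊆ ({x, y} : Finset (Fin n)) → ({x, y} : Finset (Fin n)) ⊆ T →
      S = {x} ∧ T = insert y X := by
    intro x hx y hy S hS T hT hS2 hT2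
    obtain ⟨x', hx', rfl⟩ := Finset.mem_image.mp hS
    obtain ⟨y', hy', rfl⟩ := Finset.mem_image.mp hT
    have h1 : x' ∈ ({x, y} : Finset (Fin n)) := hS2 (Finset.mem_singleton_self x')
    have hx'x : x' = x := by
      rcases Finset.mem_insert.mp h1 with h | h
      · exact h
      · exact absurd (Finset.mem_singleton.mp h ▸ hx') (fun hc => hXY y hc hy)
    have h2 : y ∈ insert y' X := hT2 (by simp)
    have hy'y : y' = y := by
      rcases Finset.mem_insert.mp h2 with h | h
      · exact h.symm
      · exact absurd hy (hXY y h)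
    exact ⟨by rw [hx'x], by rw [hy'y]⟩
  refine ⟨⟨?_, ?_⟩, ?_, ?_⟩
  · intro S hS
    obtain ⟨x, hx, rfl⟩ := Finset.mem_image.mp hS
    obtain ⟨y, hy⟩ := hY
    exact ⟨insert y X, Finset.mem_image_of_mem _ hy, by simp [Finset.singleton_subset_iff, hx]⟩
  · intro T hT
    obtain ⟨y, hy, rfl⟩ := Finset.mem_image.mp hT
    obtain ⟨x, hx⟩ := hX
    exact ⟨{x}, Finset.mem_image_of_mem _ hx, by simp [Finset.singleton_subset_iff, hx]⟩
  · intro x hx y hy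
    refine ⟨⟨{x}, Finset.mem_image_of_mem _ hx, insert y X, Finset.mem_image_of_mem _ hy,
      by simp, ?_⟩, huniq x hx y hy⟩
    intro a ha
    rcases Finset.mem_insert.mp ha with h | h
    · exact Finset.mem_insert_of_mem (h ▸ hx)
    · exact Finset.mem_insert.mpr (Or.inl (Finset.mem_singleton.mp h))
  · intro F hF hcov
    have key : ∀ x ∈ X, ∀ y ∈ Y, (({x} : Finset (Fin n)), insert y X) ∈ F := by
      intro x hx y hy
      have hmem : ({x, y} : Finset (Fin n)) ∈
          {Z : Finset (Fin n) | ∃ S ∈ X.image (fun x => ({x} : Finset (Fin n))),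
            ∃ T ∈ Y.image (fun y => insert y X), S ⊆ Z ∧ Z ⊆ T} := by
        refine ⟨{x}, Finset.mem_image_of_mem _ hx, insert y X, Finset.mem_image_of_mem _ hy,
          by simp, ?_⟩
        intro a ha
        rcases Finset.mem_insert.mp ha with h | h
        · exact Finset.mem_insert_of_mem (h ▸ hx)
        · exact Finset.mem_insert.mpr (Or.inl (Finset.mem_singleton.mp h))
      have hcv := hcov hmem
      simp only [Set.mem_iUnion, Set.mem_Icc] at hcv
      obtain ⟨p, hpF, hp1, hp2⟩ := hcv
      obtain ⟨hp𝒳, hp𝒴⟩ := hF p hpF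
      obtain ⟨e1, e2⟩ := huniq x hx y hy p.1 hp𝒳 p.2 hp𝒴 hp1 hp2
      have : p = ({x}, insert y X) := Prod.ext e1 e2
      exact this ▸ hpF
    calc X.card * Y.card = (X ×ˢ Y).card := (Finset.card_product X Y).symm
      _ ≤ F.card := by
        apply Finset.card_le_card_of_injOn (fun q => (({q.1} : Finset (Fin n)), insert q.2 X))
        · intro q hq
          obtain ⟨h1, h2⟩ := Finset.mem_product.mp hq
          exact key q.1 h1 q.2 h2
        · intro q hq q' hq' heq
          obtain ⟨h1, h2⟩ := Finset.mem_product.mp (Finset.mem_coe.mp hq')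
          simp only [Prod.mk.injEq] at heq
          obtain ⟨e1, e2⟩ := heq
          have hx : q.1 = q'.1 := Finset.singleton_injective e1
          have hy : q.2 = q'.2 := by
            have : q.2 ∈ insert q'.2 X := e2 ▸ Finset.mem_insert_self _ _
            rcases Finset.mem_insert.mp this with h | h
            · exact h
            · obtain ⟨hq1, hq2⟩ := Finset.mem_product.mp (Finset.mem_coe.mp hq)
              exact absurd hq2 (hXY q.2 h)
          exact Prod.ext hx hy
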